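/- Let K be a convex body in ℝ^d with 0 in its interior and let λ₁ = λ₁(K) be its first successive minimum. Then #(K ∩ ℤ^d) ≤ (2/λ₁ + 1)^d · vol(K)/vol(K ∩ −K). -/

import Mathlib

open MeasureTheory Set Pointwise

/-- The set of integer lattice points of `ℝ^d`. -/
def latticePts (d : ℕ) : Set (Fin d → ℝ) := {x | ∀ i, ∃ z : ℤ, x i = (z : ℝ)}

/-- **Volume bound for the number of lattice points.** Let `K ⊆ ℝ^d` be a convex body
with `0` in its interior and first successive minimum `λ₁`. Then
`#(K ∩ ℤ^d) ≤ (2/λ₁ + 1)^d · vol(K) / vol(K ∩ -K)`. -/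
theorem lattice_points_le_volume_ratio (d : ℕ) (K : Set (Fin d → ℝ))
    (hKcpt : IsCompact K) (hKconv : Convex ℝ K) (h0 : (0 : Fin d → ℝ) ∈ interior K)
    (l1 : ℝ)
    (hl1 : IsLeast {l : ℝ | 0 < l ∧ ∃ z : Fin d → ℤ,
      (fun i => (z i : ℝ)) ≠ 0 ∧ (fun i => (z i : ℝ)) ∈ l • K} l1) :
    (Set.ncard (K ∩ latticePts d) : ℝ) ≤
      (2 / l1 + 1) ^ d * (volume K).toReal / (volume (K ∩ -K)).toReal := by
  obtain ⟨⟨hl1pos, -⟩, hlb⟩ := hl1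
  set L : Set (Fin d → ℝ) := K ∩ -K with hLdef
  have hLK : L ⊆ K := inter_subset_left
  have hLconv : Convex ℝ L := hKconv.inter hKconv.neg
  have hLcpt : IsCompact L := hKcpt.inter_right hKcpt.neg.isClosed
  have hintneg : ∀ s : Set (Fin d → ℝ), interior (-s) = -interior s := by
    intro s
    have := (Homeomorph.neg (Fin d → ℝ)).preimage_interior s
    simpa using this.symm
  have hLsymm : -L = L := by
    ext x
    simp only [hLdef, Set.mem_neg, Set.mem_inter_iff, neg_neg]
    tauto
  have h0L : (0 : Fin d → ℝ) ∈ interior L := by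
    rw [hLdef, interior_inter]
    refine ⟨h0, ?_⟩
    rw [hintneg K]
    simpa using h0
  set c : ℝ := l1 / 2 with hc
  have hcpos : 0 < c := by positivity
  -- no nonzero lattice point in interior (l1 • L)
  have h0l1L : (0 : Fin d → ℝ) ∈ interior (l1 • L) := by
    rw [interior_smul₀ hl1pos.ne']
    simpa using smul_mem_smul_set (a := l1) h0L
  have habs : Absorbent ℝ (l1 • L) :=
    absorbent_nhds_zero (mem_interior_iff_mem_nhds.1 h0l1L)
  have no_lat : ∀ z : Fin d → ℤ, (fun i => (z i : ℝ)) ≠ 0 →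
      (fun i => (z i : ℝ)) ∉ interior (l1 • L) := by
    intro z hz hmem
    have h1 : gauge (l1 • L) (fun i => (z i : ℝ)) < 1 :=
      interior_subset_gauge_lt_one _ hmem
    obtain ⟨r, hr0, hr1, hrmem⟩ := exists_lt_of_gauge_lt habs h1
    rw [smul_smul] at hrmem
    have hmemK : (fun i => (z i : ℝ)) ∈ (r * l1) • K := smul_set_mono hLK hrmem
    have hle := hlb ⟨mul_pos hr0 hl1pos, z, hz, hmemK⟩
    nlinarith
  -- disjointness of translates
  have hdisj : (K ∩ latticePts d).PairwiseDisjoint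
      (fun x => x +ᵥ interior (c • L)) := by
    intro x hx y hy hxy
    rw [Function.onFun, Set.disjoint_left]
    intro u hux huy
    obtain ⟨a, ha, hau⟩ := hux
    obtain ⟨b, hb, hbu⟩ := huy
    have hau' : x + a = u := hau
    have hbu' : y + b = u := hbu
    have hxy' : x - y = b + (-a) := by
      have h3 : x + a = y + b := by rw [hau', hbu']
      linear_combination h3
    have hnegcL : -(c • L) = c • L := by rw [← Set.smul_set_neg, hLsymm]
    have hna : -a ∈ interior (c • L) := by
      have h5 : -a ∈ -interior (c • L) := by simpa using ha
      rwa [← hintneg, hnegcL] at h5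
    have key : x - y ∈ interior (l1 • L) := by
      have hsum : x - y ∈ interior (c • L) + interior (c • L) := by
        rw [hxy']
        exact Set.add_mem_add hb hna
      have hopen : IsOpen (interior (c • L) + interior (c • L)) :=
        IsOpen.add_left isOpen_interior
      have hsub : interior (c • L) + interior (c • L) ⊆ c • L + c • L :=
        Set.add_subset_add interior_subset interior_subset
      have hsumeq : c • L + c • L = l1 • L := by
        rw [← hLconv.add_smul hcpos.le hcpos.le]
        norm_num [hc]
      exact interior_maximal (hsumeq ▸ hsub) hopen hsum
    have hzx : ∀ i, x i = ((hx.2 i).choose : ℝ) := fun i => (hx.2 i).choose_spec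
    have hzy : ∀ i, y i = ((hy.2 i).choose : ℝ) := fun i => (hy.2 i).choose_spec
    have heq : (fun i => (((hx.2 i).choose - (hy.2 i).choose : ℤ) : ℝ)) = x - y := by
      funext i
      push_cast
      rw [← hzx i, ← hzy i, Pi.sub_apply]
    have hne : (fun i => (((hx.2 i).choose - (hy.2 i).choose : ℤ) : ℝ)) ≠ 0 := by
      rw [heq]
      exact sub_ne_zero.2 hxy
    exact no_lat _ hne (heq ▸ key)
  -- finiteness
  have hSfin : (K ∩ latticePts d).Finite := by
    obtain ⟨R, hR⟩ := hKcpt.isBounded.subset_closedBall 0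
    have hsub : (K ∩ latticePts d) ⊆
        (fun z : Fin d → ℤ => fun i => (z i : ℝ)) ''
          (Set.pi Set.univ fun _ => Set.Icc ⌈-R⌉ ⌊R⌋) := by
      rintro x ⟨hxK, hxl⟩
      refine ⟨fun i => (hxl i).choose, fun i _ => ?_, ?_⟩
      · have hxi : |x i| ≤ R := by
          have h1 : ‖x i‖ ≤ ‖x‖ := norm_le_pi_norm x i
          have h2 : ‖x‖ ≤ R := by
            have := hR hxK
            simpa [Metric.mem_closedBall, dist_zero_right] using this
          simpa using h1.trans h2
        have hxieq : x i = ((hxl i).choose : ℝ) := (hxl i).choose_spec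
        rw [hxieq] at hxi
        rw [abs_le] at hxi
        exact ⟨Int.ceil_le.2 (by exact_mod_cast hxi.1), Int.le_floor.2 (by exact_mod_cast hxi.2)⟩
      · funext i
        exact ((hxl i).choose_spec).symm
    exact ((Set.Finite.pi fun _ => Set.finite_Icc _ _).image _).subset hsub
  set S := hSfin.toFinset with hSdef
  -- measurability & translate volumes
  have hIconv : Convex ℝ (c • L) := hLconv.smul c
  have hIvol : volume (interior (c • L)) = volume (c • L) := by
    refine le_antisymm (measure_mono interior_subset) ?_
    calc volume (c • L) ≤ volume (interior (c • L) ∪ frontier (c • L)) :=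
          measure_mono (subset_closure.trans (closure_eq_interior_union_frontier (c • L)).subset)
      _ ≤ volume (interior (c • L)) + volume (frontier (c • L)) := measure_union_le _ _
      _ = volume (interior (c • L)) := by
          rw [hIconv.addHaar_frontier volume, add_zero]
  -- main measure inequality
  have hsubK : ∀ x ∈ K, x +ᵥ interior (c • L) ⊆ (1 + c) • K := by
    intro x hx u hu
    obtain ⟨a, ha, hau⟩ := hu
    have hau' : x + a = u := hau
    have h1 : u ∈ K + c • K := by
      rw [← hau']
      exact Set.add_mem_add hx (smul_set_mono hLK (interior_subset ha))
    rwa [show K + c • K = (1 + c) • K by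
      rw [hKconv.add_smul zero_le_one hcpos.le, one_smul]] at h1
  have hmain : ((K ∩ latticePts d).ncard : ENNReal) * volume (c • L) ≤
      volume ((1 + c) • K) := by
    have hmeas : ∀ x ∈ S, MeasurableSet (x +ᵥ interior (c • L)) := by
      intro x _
      exact (isOpen_interior.vadd x).measurableSet
    have hdisj' : (↑S : Set (Fin d → ℝ)).PairwiseDisjoint
        (fun x => x +ᵥ interior (c • L)) := by
      rwa [hSdef, hSfin.coe_toFinset]
    calc ((K ∩ latticePts d).ncard : ENNReal) * volume (c • L)
        = ∑ x ∈ S, volume (x +ᵥ interior (c • L)) := by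
          have : ∀ x ∈ S, volume (x +ᵥ interior (c • L)) = volume (c • L) := by
            intro x _
            rw [measure_vadd, hIvol]
          rw [Finset.sum_congr rfl this, Finset.sum_const, nsmul_eq_mul,
            Set.ncard_eq_toFinset_card _ hSfin]
      _ = volume (⋃ x ∈ S, x +ᵥ interior (c • L)) :=
          (measure_biUnion_finset hdisj' hmeas).symm
      _ ≤ volume ((1 + c) • K) := by
          refine measure_mono (Set.iUnion₂_subset fun x hx => ?_)
          exact hsubK x ((hSfin.mem_toFinset.1 hx).1)
  -- volumes of scaled sets
  have hfr : Module.finrank ℝ (Fin d → ℝ) = d := Module.finrank_fin_fun ℝ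
  have hvolL : volume (c • L) = ENNReal.ofReal (c ^ d) * volume L := by
    rw [Measure.addHaar_smul_of_nonneg volume hcpos.le, hfr]
  have hvolK : volume ((1 + c) • K) = ENNReal.ofReal ((1 + c) ^ d) * volume K := by
    rw [Measure.addHaar_smul_of_nonneg volume (by positivity), hfr]
  rw [hvolL, hvolK] at hmain
  -- convert to reals
  have hKfin : volume K ≠ ⊤ := hKcpt.measure_lt_top.ne
  have hLfin : volume L ≠ ⊤ := hLcpt.measure_lt_top.ne
  have hLpos : 0 < (volume L).toReal := by
    refine ENNReal.toReal_pos ?_ hLfin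
    exact (Measure.measure_pos_of_nonempty_interior volume ⟨0, h0L⟩).ne'
  have hreal : ((K ∩ latticePts d).ncard : ℝ) * (c ^ d * (volume L).toReal) ≤
      (1 + c) ^ d * (volume K).toReal := by
    have h1 := ENNReal.toReal_mono (by
      exact ENNReal.mul_ne_top ENNReal.ofReal_ne_top hKfin) hmain
    rw [ENNReal.toReal_mul, ENNReal.toReal_mul, ENNReal.toReal_mul,
      ENNReal.toReal_ofReal (by positivity), ENNReal.toReal_ofReal (by positivity),
      ENNReal.toReal_natCast] at h1
    linarith [h1]
  have hrw : (2 / l1 + 1) ^ d * (volume K).toReal / (volume L).toReal =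
      ((1 + c) ^ d * (volume K).toReal) / (c ^ d * (volume L).toReal) := by
    have h2 : (2 / l1 + 1) = (1 + c) / c := by
      field_simp [hc]
      rw [hc]; ring
    rw [h2, div_pow]
    field_simp
  rw [hrw, le_div_iff₀ (by positivity)]
  linarith [hreal]
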